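/- Let A be an n-dimensional naturally graded p-filiform non-unital associative algebra over ℂ (p ≥ 1, n − p ≥ 3) with natural grading (𝒜_i), let {e_1, …, e_{n−p}, f_1, …, f_p} be an adapted basis, and let x, y ∈ 𝒜_1 satisfy e_1·x = 0 and e_1·y = 0. Then x·y = 0. (In the paper's notation: f_i·f_j = 0 for all 1 ≤ i, j ≤ s_1, where f_1, …, f_{s_1} are the basis vectors of 𝒜_1 other than e_1.) -/

import Mathlib

variable (A : Type*) [NonUnitalRing A] [Module ℂ A] [SMulCommClass ℂ A A] [IsScalarTower ℂ A A]

/-- Product of two submodules of a non-unital algebra: the span of all pairwise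
products. In particular `pmul A ⊤ ⊤` is `A²`, the span of all products `x·y`. -/
def pmul (I J : Submodule ℂ A) : Submodule ℂ A :=
  Submodule.span ℂ (Set.image2 (· * ·) (I : Set A) (J : Set A))

/-- The series of powers `A^1 = A`, `A^{i+1} = Σ_{k=1}^{i} A^k · A^{i+1-k}`.
(`algPow A 0` is junk, set to `⊤`.) -/
def algPow : ℕ → Submodule ℂ A
  | 0 => ⊤
  | 1 => ⊤
  | n + 2 => ⨆ k : Fin (n + 1), pmul A (algPow (k + 1)) (algPow (n + 1 - k))
  termination_by n => n
  decreasing_by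
  · omega
  · omega

/-- An algebra is nilpotent if some power `A^m` (`m ≥ 1`) vanishes. -/
def IsNilpotentAlg : Prop :=
  ∃ m : ℕ, 1 ≤ m ∧ algPow A m = ⊥

/-- A natural grading of `A`: a family of submodules `𝒜 1, 𝒜 2, …` (with `𝒜 0 = ⊥`)
such that `A` is their internal direct sum, `𝒜 i · 𝒜 j ⊆ 𝒜 (i+j)` and
`𝒜 (i+1) = 𝒜 1 · 𝒜 i`. -/
structure IsNaturalGrading (𝒜 : ℕ → Submodule ℂ A) : Prop where
  zero : 𝒜 0 = ⊥
  internal : DirectSum.IsInternal 𝒜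
  mul_le : ∀ i j, 1 ≤ i → 1 ≤ j → pmul A (𝒜 i) (𝒜 j) ≤ 𝒜 (i + j)
  succ : ∀ i, 1 ≤ i → 𝒜 (i + 1) = pmul A (𝒜 1) (𝒜 i)

/-- `x ∈ A ∖ A²` realizes the characteristic sequence `(n-p, 1, …, 1)`:
the left multiplication `L_x` satisfies `L_x^{n-p-1} ≠ 0` and `rank L_x = n-p-1`. -/
def RealizesCharSeq (n p : ℕ) (x : A) : Prop :=
  x ∉ pmul A ⊤ ⊤ ∧ (LinearMap.mulLeft ℂ x) ^ (n - p - 1) ≠ 0 ∧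
    Module.finrank ℂ (LinearMap.range (LinearMap.mulLeft ℂ x)) = n - p - 1

/-- `A` is `p`-filiform: `C(A) = (n-p, 1, …, 1)`, i.e. some `x ∈ A ∖ A²` realizes the
characteristic sequence, and for every `y ∈ A ∖ A²` one has `L_y^{n-p} = 0` and, if
`L_y^{n-p-1} ≠ 0`, then `rank L_y = n-p-1`. -/
def IsPFiliform (n p : ℕ) : Prop :=
  (∃ x : A, RealizesCharSeq A n p x) ∧
    ∀ y : A, y ∉ pmul A ⊤ ⊤ →
      (LinearMap.mulLeft ℂ y) ^ (n - p) = 0 ∧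
        ((LinearMap.mulLeft ℂ y) ^ (n - p - 1) ≠ 0 →
          Module.finrank ℂ (LinearMap.range (LinearMap.mulLeft ℂ y)) = n - p - 1)

/-- An adapted basis `{e_1,…,e_{n-p}, f_1,…,f_p}` of a `p`-filiform algebra:
a basis with `e_1` realizing the characteristic sequence, `e_1 e_i = e_{i+1}` for
`1 ≤ i ≤ n-p-1`, `e_1 e_{n-p} = 0`, and `e_1 f_j = 0` for `1 ≤ j ≤ p`. -/
structure IsAdaptedBasis (n p : ℕ) (e f : ℕ → A) : Prop where
  indep : LinearIndependent ℂ
    (Sum.elim (fun i : Fin (n - p) => e (i.1 + 1)) (fun j : Fin p => f (j.1 + 1)))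
  span : Submodule.span ℂ (Set.range
    (Sum.elim (fun i : Fin (n - p) => e (i.1 + 1)) (fun j : Fin p => f (j.1 + 1)))) = ⊤
  char : RealizesCharSeq A n p (e 1)
  mul_e : ∀ i, 1 ≤ i → i ≤ n - p - 1 → e 1 * e i = e (i + 1)
  mul_last : e 1 * e (n - p) = 0
  mul_f : ∀ j, 1 ≤ j → j ≤ p → e 1 * f j = 0

/-- `s_i = dim 𝒜_i − 1` (truncated subtraction). -/
noncomputable def sdim (𝒜 : ℕ → Submodule ℂ A) (i : ℕ) : ℕ :=
  Module.finrank ℂ (𝒜 i) - 1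

/-- `S k = s_1 + ⋯ + s_k` (with `S 0 = 0`). -/
noncomputable def sSum (𝒜 : ℕ → Submodule ℂ A) (k : ℕ) : ℕ :=
  ∑ j ∈ Finset.Icc 1 k, sdim A 𝒜 j

/-- A homogeneous adapted basis: an adapted basis with `e_i ∈ 𝒜_i` for
`1 ≤ i ≤ n-p` and `f_{s_1+⋯+s_{i-1}+1}, …, f_{s_1+⋯+s_i} ∈ 𝒜_i` for `1 ≤ i ≤ n-p`. -/
structure IsHomogAdaptedBasis (n p : ℕ) (𝒜 : ℕ → Submodule ℂ A) (e f : ℕ → A) : Prop where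
  adapted : IsAdaptedBasis A n p e f
  e_mem : ∀ i, 1 ≤ i → i ≤ n - p → e i ∈ 𝒜 i
  f_mem : ∀ i, 1 ≤ i → i ≤ n - p →
    ∀ t, sSum A 𝒜 (i - 1) < t → t ≤ sSum A 𝒜 i → f t ∈ 𝒜 i

set_option linter.unusedSectionVars false

lemma mul_mem_pmul {I J : Submodule ℂ A} {a b : A} (ha : a ∈ I) (hb : b ∈ J) :
    a * b ∈ pmul A I J :=
  Submodule.subset_span (Set.mem_image2_of_mem ha hb)

lemma disjoint_one_sq (𝒜 : ℕ → Submodule ℂ A) (hgr : IsNaturalGrading A 𝒜) :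
    Disjoint (𝒜 1) (pmul A ⊤ ⊤) := by
  have htop : (⨆ i, 𝒜 i) = ⊤ := hgr.internal.submodule_iSup_eq_top
  have hle : pmul A ⊤ ⊤ ≤ ⨆ (j) (_ : j ≠ 1), 𝒜 j := by
    rw [pmul, Submodule.span_le]
    rintro _ ⟨a, ha, b, hb, rfl⟩
    have ha' : a ∈ ⨆ i, 𝒜 i := htop.ge trivial
    have hb' : b ∈ ⨆ i, 𝒜 i := htop.ge trivial
    refine Submodule.iSup_induction 𝒜 (motive := fun a => ∀ b ∈ (⨆ i, 𝒜 i), a * b ∈ ⨆ (j) (_ : j ≠ 1), 𝒜 j)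
      ha' ?_ ?_ ?_ b hb'
    · intro i a hai b hb'
      refine Submodule.iSup_induction 𝒜 (motive := fun b => a * b ∈ ⨆ (j) (_ : j ≠ 1), 𝒜 j) hb' ?_ ?_ ?_
      · intro j b hbj
        rcases Nat.eq_zero_or_pos i with hi | hi
        · subst hi; rw [hgr.zero, Submodule.mem_bot] at hai; simp [hai]
        rcases Nat.eq_zero_or_pos j with hj | hj
        · subst hj; rw [hgr.zero, Submodule.mem_bot] at hbj; simp [hbj]
        have : a * b ∈ 𝒜 (i + j) := hgr.mul_le i j hi hj (mul_mem_pmul A hai hbj)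
        exact Submodule.mem_iSup_of_mem (i + j) (Submodule.mem_iSup_of_mem (by omega) this)
      · simp
      · intro u v hu hv; rw [mul_add]; exact add_mem hu hv
    · intro b _; simp
    · intro u v hu hv b hb'; rw [add_mul]; exact add_mem (hu b hb') (hv b hb')
  exact (hgr.internal.submodule_iSupIndep (i := 1)).mono_right hle

lemma h1x_gen {e1 x : A} (hx0 : e1 * x = 0) (c : A) : e1 * (x * c) = 0 := by
  rw [← mul_assoc, hx0, zero_mul]

lemma key_pow (e : ℕ → A) (x : A) (hx0 : e 1 * x = 0) (R : ℕ)
    (hmul : ∀ i, 1 ≤ i → i ≤ R → e 1 * e i = e (i + 1)) (t : ℂ) :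
    ∀ m, m ≤ R → ((LinearMap.mulLeft ℂ (e 1 + t • x)) ^ m) (e 1)
      = ∑ a ∈ Finset.range (m + 1), t ^ a • ((LinearMap.mulLeft ℂ x) ^ a) (e (m + 1 - a)) := by
  intro m
  induction m with
  | zero => simp
  | succ m ih =>
    intro hm
    rw [pow_succ', Module.End.mul_apply, ih (by omega), map_sum]
    have step : ∀ a ∈ Finset.range (m + 1),
        (LinearMap.mulLeft ℂ (e 1 + t • x)) (t ^ a • ((LinearMap.mulLeft ℂ x) ^ a) (e (m + 1 - a)))
        = t ^ a • (e 1 * (((LinearMap.mulLeft ℂ x) ^ a) (e (m + 1 - a))))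
          + t ^ (a + 1) • ((LinearMap.mulLeft ℂ x) ^ (a + 1)) (e (m + 1 - a)) := by
      intro a _
      rw [map_smul, LinearMap.mulLeft_apply, add_mul, smul_mul_assoc, smul_add, smul_smul,
        ← pow_succ]
      congr 1
      rw [pow_succ' (LinearMap.mulLeft ℂ x) a, Module.End.mul_apply, LinearMap.mulLeft_apply]
    rw [Finset.sum_congr rfl step, Finset.sum_add_distrib]
    have first : ∑ a ∈ Finset.range (m + 1),
        t ^ a • (e 1 * (((LinearMap.mulLeft ℂ x) ^ a) (e (m + 1 - a)))) = e (m + 2) := by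
      rw [Finset.sum_range_succ']
      have hz : ∀ a ∈ Finset.range m,
          t ^ (a + 1) • (e 1 * (((LinearMap.mulLeft ℂ x) ^ (a + 1)) (e (m + 1 - (a + 1))))) = 0 := by
        intro a _
        rw [pow_succ' (LinearMap.mulLeft ℂ x), Module.End.mul_apply, LinearMap.mulLeft_apply,
          h1x_gen A hx0, smul_zero]
      rw [Finset.sum_congr rfl hz, Finset.sum_const_zero, zero_add]
      simp only [pow_zero, one_smul, Nat.sub_zero, Module.End.one_apply, pow_zero]
      exact hmul (m + 1) (by omega) (by omega)
    rw [first]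
    rw [Finset.sum_range_succ' (fun a => t ^ a • ((LinearMap.mulLeft ℂ x) ^ a) (e (m + 1 + 1 - a))) (m + 1)]
    simp only [pow_zero, one_smul, Module.End.one_apply, Nat.sub_zero, Nat.succ_sub_succ]
    exact add_comm _ _

/-- for an `n`-dimensional naturally graded `p`-filiform complex
associative algebra with adapted basis `{e_1,…,e_{n-p}, f_1,…,f_p}` (the `e_i`
homogeneous, `e_i ∈ 𝒜_i`), any `x, y ∈ 𝒜_1` with `e_1·x = 0` and `e_1·y = 0`
satisfy `x·y = 0` (in the paper's notation, `f_i·f_j = 0` for `1 ≤ i, j ≤ s_1`). -/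
theorem deg_one_kernel_mul_zero (n p : ℕ) (hp : 1 ≤ p) (hnp : 3 ≤ n - p)
    [FiniteDimensional ℂ A] (hdim : Module.finrank ℂ A = n)
    (hnil : IsNilpotentAlg A)
    (𝒜 : ℕ → Submodule ℂ A) (hgr : IsNaturalGrading A 𝒜)
    (hpf : IsPFiliform A n p)
    (e f : ℕ → A) (hbasis : IsAdaptedBasis A n p e f)
    (he : ∀ i, 1 ≤ i → i ≤ n - p → e i ∈ 𝒜 i)
    (x y : A) (hx : x ∈ 𝒜 1) (hy : y ∈ 𝒜 1)
    (hx0 : e 1 * x = 0) (hy0 : e 1 * y = 0) :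
    x * y = 0 := by
  by_contra hw
  obtain ⟨r, hq⟩ : ∃ r, n - p = r + 3 := ⟨n - p - 3, by omega⟩
  have hR : n - p - 1 = r + 2 := by omega
  -- nonzero e's
  have he_ne : ∀ i, 1 ≤ i → i ≤ r + 3 → e i ≠ 0 := by
    intro i h1 h2
    have h := hbasis.indep.ne_zero (Sum.inl ⟨i - 1, by omega⟩)
    simpa [show i - 1 + 1 = i by omega] using h
  have hindep := hgr.internal.submodule_iSupIndep
  have hpair := hindep.pairwiseDisjoint
  -- functional separating e (r+3)
  set c : ℕ → A := fun a => ((LinearMap.mulLeft ℂ x) ^ a) (e (r + 3 - a)) with hcdef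
  have hc0 : c 0 = e (r + 3) := by simp [hcdef]
  obtain ⟨φ, hφ⟩ : ∃ φ : Module.Dual ℂ A, φ (e (r + 3)) ≠ 0 := by
    by_contra h; push_neg at h
    exact he_ne (r + 3) (by omega) le_rfl ((Module.forall_dual_apply_eq_zero_iff ℂ _).mp h)
  set Q : Polynomial ℂ := ∑ a ∈ Finset.range (r + 3), Polynomial.C (φ (c a)) * Polynomial.X ^ a
    with hQdef
  have hQne : Q ≠ 0 := by
    intro h
    have hev : Q.eval 0 = φ (c 0) := by
      rw [hQdef, Polynomial.eval_finset_sum, Finset.sum_range_succ']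
      simp
    rw [h, Polynomial.eval_zero, hc0] at hev
    exact hφ hev.symm
  -- choose generic t
  have hbadv : ∀ k : Fin (r + 2), Set.Finite {t : ℂ | e (k.1 + 2) + t • (x * e (k.1 + 1)) = 0} := by
    intro k
    apply Set.Subsingleton.finite
    intro t1 h1 t2 h2
    by_contra hne
    have hxe : x * e (k.1 + 1) = 0 := by
      have h1' : e (k.1 + 2) + t1 • (x * e (k.1 + 1)) = 0 := h1
      have h2' : e (k.1 + 2) + t2 • (x * e (k.1 + 1)) = 0 := h2
      have h4 : t1 • (x * e (k.1 + 1)) = t2 • (x * e (k.1 + 1)) :=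
        add_left_cancel (h1'.trans h2'.symm)
      have hsub : (t1 - t2) • (x * e (k.1 + 1)) = 0 := by rw [sub_smul, h4, sub_self]
      rcases smul_eq_zero.mp hsub with h | h
      · exact absurd (sub_eq_zero.mp h) hne
      · exact h
    have hk := k.2
    have : e (k.1 + 2) = 0 := by
      have h1' : e (k.1 + 2) + t1 • (x * e (k.1 + 1)) = 0 := h1
      rwa [hxe, smul_zero, add_zero] at h1'
    exact he_ne (k.1 + 2) (by omega) (by omega) this
  have hbadfin : (insert (0 : ℂ) ({t | Q.IsRoot t} ∪
      ⋃ k : Fin (r + 2), {t : ℂ | e (k.1 + 2) + t • (x * e (k.1 + 1)) = 0})).Finite :=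
    Set.Finite.insert _ ((Polynomial.finite_setOf_isRoot hQne).union (Set.finite_iUnion hbadv))
  obtain ⟨t, ht⟩ := hbadfin.infinite_compl.nonempty
  simp only [Set.mem_compl_iff, Set.mem_insert_iff, Set.mem_union, Set.mem_iUnion,
    Set.mem_setOf_eq, not_or] at ht
  obtain ⟨ht0, htQ, htv⟩ := ht
  push_neg at htv
  -- the generic element z
  set z : A := e 1 + t • x with hzdef
  have hz1 : z ∈ 𝒜 1 := add_mem (he 1 le_rfl (by omega)) (Submodule.smul_mem _ _ hx)
  have he2 : e 1 * z = e 2 := by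
    rw [hzdef, mul_add, mul_smul_comm, hx0, smul_zero, add_zero]
    exact hbasis.mul_e 1 le_rfl (by omega)
  have hzne : z ≠ 0 := fun h => he_ne 2 (by omega) (by omega) (by rw [← he2, h, mul_zero])
  have hznotsq : z ∉ pmul A ⊤ ⊤ := fun hmem =>
    hzne (Submodule.disjoint_def.mp (disjoint_one_sq A 𝒜 hgr) z hz1 hmem)
  obtain ⟨-, hzrank⟩ := hpf.2 z hznotsq
  have hP : ((LinearMap.mulLeft ℂ z) ^ (r + 2)) (e 1)
      = ∑ a ∈ Finset.range (r + 3), t ^ a • c a := by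
    have hmul : ∀ i, 1 ≤ i → i ≤ r + 2 → e 1 * e i = e (i + 1) := fun i h1 h2 =>
      hbasis.mul_e i h1 (by omega)
    have h := key_pow A e x hx0 (r + 2) hmul t (r + 2) le_rfl
    rw [hzdef, h]
  have hPne : ((LinearMap.mulLeft ℂ z) ^ (r + 2)) (e 1) ≠ 0 := by
    intro h0
    apply htQ
    have hev : Q.eval t = φ (∑ a ∈ Finset.range (r + 3), t ^ a • c a) := by
      rw [hQdef, Polynomial.eval_finset_sum, map_sum]
      exact Finset.sum_congr rfl fun a _ => by
        rw [Polynomial.eval_mul, Polynomial.eval_C, Polynomial.eval_pow, Polynomial.eval_X,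
          map_smul]
        simp [mul_comm]
    rw [Polynomial.IsRoot, hev, ← hP, h0, map_zero]
  have hzpow : (LinearMap.mulLeft ℂ z) ^ (n - p - 1) ≠ 0 := by
    rw [hR]
    intro h0
    exact hPne (by rw [h0]; rfl)
  have hrank : Module.finrank ℂ (LinearMap.range (LinearMap.mulLeft ℂ z)) = r + 2 := by
    have h := hzrank hzpow; rwa [hR] at h
  -- the independent family v
  set v : Fin (r + 2) → A := fun k => e (k.1 + 2) + t • (x * e (k.1 + 1)) with hvdef
  have hvne : ∀ k, v k ≠ 0 := fun k => htv k
  have hvmem : ∀ k : Fin (r + 2), v k ∈ 𝒜 (k.1 + 2) := by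
    intro k
    have hk := k.2
    have hmm := hgr.mul_le 1 (k.1 + 1) le_rfl (by omega)
      (mul_mem_pmul A hx (he (k.1 + 1) (by omega) (by omega)))
    rw [show 1 + (k.1 + 1) = k.1 + 2 from by omega] at hmm
    exact add_mem (he _ (by omega) (by omega)) (Submodule.smul_mem _ _ hmm)
  have hvindep : LinearIndependent ℂ v := by
    refine iSupIndep.linearIndependent _
      (hindep.comp (f := fun k : Fin (r + 2) => k.1 + 2) ?_) hvmem hvne
    intro a b hab
    simp only at hab
    exact Fin.ext (by omega)
  have hw2 : x * y ∈ 𝒜 2 := hgr.mul_le 1 1 le_rfl le_rfl (mul_mem_pmul A hx hy)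
  have h1w : e 1 * (x * y) = 0 := h1x_gen A hx0 y
  have h1v : ∀ k : Fin (r + 2), e 1 * v k = if k.1 = r + 1 then 0 else e (k.1 + 3) := by
    intro k
    have hk := k.2
    simp only [hvdef]
    rw [mul_add, mul_smul_comm, h1x_gen A hx0, smul_zero, add_zero]
    by_cases hcase : k.1 = r + 1
    · rw [if_pos hcase, hcase]
      have hml := hbasis.mul_last
      rw [hq] at hml
      exact hml
    · rw [if_neg hcase]
      exact hbasis.mul_e (k.1 + 2) (by omega) (by omega)
  have hwnotin : (x * y) ∉ Submodule.span ℂ (Set.range v) := by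
    intro hmem
    obtain ⟨cc, hcc⟩ := (Submodule.mem_span_range_iff_exists_fun ℂ).mp hmem
    have h0 := congrArg (fun u => e 1 * u) hcc
    simp only [Finset.mul_sum, mul_smul_comm] at h0
    rw [h1w, Fin.sum_univ_castSucc] at h0
    have hlz : cc (Fin.last (r + 1)) • (e 1 * v (Fin.last (r + 1))) = 0 := by
      rw [h1v]
      simp
    have hterm : ∀ j : Fin (r + 1), cc j.castSucc • (e 1 * v j.castSucc)
        = cc j.castSucc • e (j.1 + 3) := by
      intro j
      have hj := j.2
      rw [h1v, if_neg (show ¬((j.castSucc : Fin (r + 2)).1 = r + 1) from by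
        simp only [Fin.coe_castSucc]; omega)]
      simp only [Fin.coe_castSucc]
    rw [hlz, add_zero, Finset.sum_congr rfl (fun j _ => hterm j)] at h0
    have heind : LinearIndependent ℂ (fun j : Fin (r + 1) => e (j.1 + 3)) := by
      have hinj : Function.Injective
          (fun j : Fin (r + 1) => (Sum.inl ⟨j.1 + 2, by omega⟩ : Fin (n - p) ⊕ Fin p)) := by
        intro a b hab
        simp only [Sum.inl.injEq, Fin.mk.injEq] at hab
        exact Fin.ext (by omega)
      exact hbasis.indep.comp _ hinj
    have hccz := Fintype.linearIndependent_iff.mp heind (fun j => cc j.castSucc) h0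
    rw [Fin.sum_univ_castSucc] at hcc
    have hterm2 : ∀ j : Fin (r + 1), cc j.castSucc • v j.castSucc = 0 := fun j => by
      rw [show cc j.castSucc = 0 from hccz j, zero_smul]
    rw [Finset.sum_congr rfl (fun j _ => hterm2 j), Finset.sum_const_zero, zero_add] at hcc
    have hwq : x * y ∈ 𝒜 (r + 3) := by
      rw [← hcc]
      have hm := hvmem (Fin.last (r + 1))
      rw [show ((Fin.last (r + 1)).1 + 2) = r + 3 from by simp only [Fin.val_last]] at hm
      exact Submodule.smul_mem _ _ hm
    exact hw (Submodule.disjoint_def.mp (hpair (show (2 : ℕ) ≠ r + 3 by omega)) _ hw2 hwq)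
  -- dimension count
  have hS : Module.finrank ℂ (Submodule.span ℂ (Set.range v)) = r + 2 := by
    rw [finrank_span_eq_card hvindep, Fintype.card_fin]
  have hT : Module.finrank ℂ (Submodule.span ℂ {x * y}) = 1 := finrank_span_singleton hw
  have hdisj : Disjoint (Submodule.span ℂ (Set.range v)) (Submodule.span ℂ {x * y}) :=
    (Submodule.disjoint_span_singleton' hw).mpr hwnotin
  have hsum := Submodule.finrank_sup_add_finrank_inf_eq
    (Submodule.span ℂ (Set.range v)) (Submodule.span ℂ {x * y})
  rw [hS, hT, disjoint_iff.mp hdisj, finrank_bot, add_zero] at hsum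
  have hle : Submodule.span ℂ (Set.range v) ⊔ Submodule.span ℂ {x * y} ≤
      LinearMap.range (LinearMap.mulLeft ℂ z) := by
    apply sup_le
    · rw [Submodule.span_le]
      rintro _ ⟨k, rfl⟩
      have hk := k.2
      refine ⟨e (k.1 + 1), ?_⟩
      rw [LinearMap.mulLeft_apply, hzdef, add_mul, smul_mul_assoc,
        hbasis.mul_e (k.1 + 1) (by omega) (by omega)]
    · rw [Submodule.span_le, Set.singleton_subset_iff]
      have hzy : (LinearMap.mulLeft ℂ z) y = t • (x * y) := by
        rw [LinearMap.mulLeft_apply, hzdef, add_mul, smul_mul_assoc, hy0, zero_add]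
      have hxy : x * y = t⁻¹ • (LinearMap.mulLeft ℂ z) y := by
        rw [hzy, smul_smul, inv_mul_cancel₀ ht0, one_smul]
      rw [SetLike.mem_coe, hxy]
      exact Submodule.smul_mem _ _ (LinearMap.mem_range_self _ y)
  have hge := Submodule.finrank_mono hle
  rw [hsum, hrank] at hge
  omega
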